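/- arXiv:1803.05668 — 3 statements merged into one kernel-verified Lean document; each statement's English description precedes it below -/
import Mathlib

section
/- For all real numbers s and t, the quantity A(s,t) := cosh(t) - cosh(s) + s·sinh(s) - t·sinh(s) satisfies (t-s)²/2 ≤ A(s,t) ≤ (sinh(t) - sinh(s))²/2. -/
open Real

/-- If `f s = 0` and `(u - s) * deriv f u ≥ 0` everywhere, then `f ≥ 0`. -/
lemma aux_nonneg (f : ℝ → ℝ) (hf : Differentiable ℝ f) (s : ℝ) (h0 : f s = 0)
    (hd : ∀ u, 0 ≤ (u - s) * deriv f u) : ∀ t, 0 ≤ f t := by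
  intro t
  rcases le_total s t with h | h
  · have hmono : MonotoneOn f (Set.Icc s t) := by
      apply monotoneOn_of_deriv_nonneg (convex_Icc s t) hf.continuous.continuousOn
        (fun u _ => (hf u).differentiableWithinAt)
      intro u hu
      rw [interior_Icc] at hu
      have := hd u
      nlinarith [hu.1]
    have := hmono (Set.left_mem_Icc.2 h) (Set.right_mem_Icc.2 h) h
    linarith [h0 ▸ this]
  · have hanti : AntitoneOn f (Set.Icc t s) := by
      apply antitoneOn_of_deriv_nonpos (convex_Icc t s) hf.continuous.continuousOn
        (fun u _ => (hf u).differentiableWithinAt)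
      intro u hu
      rw [interior_Icc] at hu
      have := hd u
      nlinarith [hu.2]
    have := hanti (Set.left_mem_Icc.2 h) (Set.right_mem_Icc.2 h) h
    linarith [h0 ▸ this]

lemma sinh_sub_id_mono : Monotone (fun x : ℝ => Real.sinh x - x) := by
  have hd : ∀ x : ℝ, HasDerivAt (fun x : ℝ => Real.sinh x - x) (Real.cosh x - 1) x := by
    intro x
    exact (Real.hasDerivAt_sinh x).sub (hasDerivAt_id x)
  apply monotone_of_deriv_nonneg (fun x => (hd x).differentiableAt)
  intro x
  rw [(hd x).deriv]
  linarith [Real.one_le_cosh x]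

theorem bregman_cosh_bounds (s t : ℝ) :
    (t - s) ^ 2 / 2 ≤ Real.cosh t - Real.cosh s + s * Real.sinh s - t * Real.sinh s ∧
    Real.cosh t - Real.cosh s + s * Real.sinh s - t * Real.sinh s ≤
      (Real.sinh t - Real.sinh s) ^ 2 / 2 := by
  constructor
  · -- lower bound: g u = A(s,u) - (u-s)^2/2 ≥ 0
    have hg : ∀ u, HasDerivAt
        (fun u => Real.cosh u - Real.cosh s + s * Real.sinh s - u * Real.sinh s - (u - s)^2/2)
        (Real.sinh u - Real.sinh s - (u - s)) u := by
      intro u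
      have h1 : HasDerivAt (fun u : ℝ => (u - s)^2/2) (u - s) u := by
        have := (((hasDerivAt_id u).sub_const s).pow 2).div_const 2
        exact this.congr_deriv (by norm_num)
      have h2 : HasDerivAt (fun u : ℝ => u * Real.sinh s) (Real.sinh s) u := by
        simpa using (hasDerivAt_id u).mul_const (Real.sinh s)
      have := ((((Real.hasDerivAt_cosh u).sub_const (Real.cosh s)).add_const
        (s * Real.sinh s)).sub h2).sub h1
      exact this
    have := aux_nonneg _ (fun u => (hg u).differentiableAt) s (by ring)
      (fun u => by
        rw [(hg u).deriv]
        have := sinh_sub_id_mono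
        rcases le_total s u with h | h
        · have := sinh_sub_id_mono h
          simp only at this
          nlinarith
        · have := sinh_sub_id_mono h
          simp only at this
          nlinarith) t
    linarith
  · -- upper bound: h u = (sinh u - sinh s)^2/2 - A(s,u) ≥ 0
    have hh : ∀ u, HasDerivAt
        (fun u => (Real.sinh u - Real.sinh s)^2/2 -
          (Real.cosh u - Real.cosh s + s * Real.sinh s - u * Real.sinh s))
        ((Real.sinh u - Real.sinh s) * (Real.cosh u - 1)) u := by
      intro u
      have h1 : HasDerivAt (fun u : ℝ => (Real.sinh u - Real.sinh s)^2/2)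
          ((Real.sinh u - Real.sinh s) * Real.cosh u) u := by
        have := (((Real.hasDerivAt_sinh u).sub_const (Real.sinh s)).pow 2).div_const 2
        exact this.congr_deriv (by norm_num; ring)
      have h2 : HasDerivAt (fun u : ℝ => u * Real.sinh s) (Real.sinh s) u := by
        simpa using (hasDerivAt_id u).mul_const (Real.sinh s)
      have := h1.sub ((((Real.hasDerivAt_cosh u).sub_const (Real.cosh s)).add_const
        (s * Real.sinh s)).sub h2)
      exact this.congr_deriv (by ring)
    have := aux_nonneg _ (fun u => (hh u).differentiableAt) s (by ring)
      (fun u => by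
        rw [(hh u).deriv]
        have hc := Real.one_le_cosh u
        rcases le_total s u with h | h
        · have h1 := Real.sinh_le_sinh.2 h
          nlinarith [mul_nonneg (mul_nonneg (sub_nonneg.2 h) (sub_nonneg.2 h1))
            (by linarith : (0:ℝ) ≤ Real.cosh u - 1)]
        · have h1 := Real.sinh_le_sinh.2 h
          nlinarith [mul_nonneg (mul_nonneg (sub_nonneg.2 h) (sub_nonneg.2 h1))
            (by linarith : (0:ℝ) ≤ Real.cosh u - 1)]) t
    linarith
end

section
/- For all real s, (1/2)sinh²(s) - 1 + cosh(s) - s·sinh(s) ≥ 0, with minimum value 0. -/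
open Real

lemma key (s : ℝ) (hs : 0 ≤ s) :
    0 ≤ (1 / 2) * Real.sinh s ^ 2 - 1 + Real.cosh s - s * Real.sinh s := by
  set f : ℝ → ℝ := fun x => (1 / 2) * Real.sinh x ^ 2 - 1 + Real.cosh x - x * Real.sinh x with hf
  have hderiv : ∀ x : ℝ, HasDerivAt f (Real.cosh x * (Real.sinh x - x)) x := by
    intro x
    have h := (((((Real.hasDerivAt_sinh x).pow 2).const_mul (1/2 : ℝ)).sub_const 1).add
        (Real.hasDerivAt_cosh x)).sub ((hasDerivAt_id x).mul (Real.hasDerivAt_sinh x))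
    simp only [id_eq] at h
    have e : f = ((fun x => 1 / 2 * (sinh ^ 2) x - 1) + cosh - id * sinh) := by
      funext y; simp [hf]
    rw [e]
    refine h.congr_deriv ?_
    push_cast
    ring
  have hmono : MonotoneOn f (Set.Ici (0:ℝ)) := by
    apply monotoneOn_of_deriv_nonneg (convex_Ici 0)
    · exact Continuous.continuousOn (by
        continuity)
    · intro x _
      exact (hderiv x).differentiableAt.differentiableWithinAt
    · intro x hx
      rw [(hderiv x).deriv]
      have hx0 : 0 < x := by simpa using hx
      have : x ≤ Real.sinh x := Real.self_le_sinh_iff.mpr hx0.le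
      nlinarith [Real.cosh_pos x]
  have h0 : f 0 = 0 := by simp [hf]
  have h1 := hmono (Set.self_mem_Ici) (Set.mem_Ici.mpr hs) hs
  rw [h0] at h1
  simpa [hf] using h1

theorem sinh_sq_cosh_ineq :
    (∀ s : ℝ, 0 ≤ (1 / 2) * Real.sinh s ^ 2 - 1 + Real.cosh s - s * Real.sinh s) ∧
    IsLeast (Set.range fun s : ℝ =>
      (1 / 2) * Real.sinh s ^ 2 - 1 + Real.cosh s - s * Real.sinh s) 0 := by
  have hall : ∀ s : ℝ, 0 ≤ (1 / 2) * Real.sinh s ^ 2 - 1 + Real.cosh s - s * Real.sinh s := by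
    intro s
    rcases le_total 0 s with hs | hs
    · exact key s hs
    · have := key (-s) (by linarith)
      simpa using this
  refine ⟨hall, ⟨⟨0, by simp⟩, ?_⟩⟩
  rintro x ⟨s, rfl⟩
  exact hall s
end

section
/- Let φ: [s₀, ∞) → ℝ be nonnegative and nonincreasing, and suppose there exist constants C > 0, α > 0 and β > 1 such that φ(h) ≤ C·φ(s)^β / (h - s)^α for all h > s ≥ s₀. Define e by e^α = C·φ(s₀)^(β-1)·2^(αβ/(β-1)). Then φ(s₀ + e) = 0. -/
open Filter Topology

theorem stampacchia_iteration_lemma (φ : ℝ → ℝ) (s₀ C α β e : ℝ)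
    (hC : 0 < C) (hα : 0 < α) (hβ : 1 < β)
    (hnonneg : ∀ t, s₀ ≤ t → 0 ≤ φ t)
    (hmono : ∀ t₁ t₂, s₀ ≤ t₁ → t₁ ≤ t₂ → φ t₂ ≤ φ t₁)
    (hineq : ∀ h s, s₀ ≤ s → s < h → φ h ≤ C * φ s ^ β / (h - s) ^ α)
    (he0 : 0 ≤ e)
    (he : e ^ α = C * φ s₀ ^ (β - 1) * 2 ^ (α * β / (β - 1))) :
    φ (s₀ + e) = 0 := by
  have hs0e : s₀ ≤ s₀ + e := by linarith
  have h2 : (0:ℝ) < 2 := two_pos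
  have hφe0 : 0 ≤ φ (s₀ + e) := hnonneg _ hs0e
  by_cases hφ0 : φ s₀ = 0
  · have h1 := hmono s₀ (s₀ + e) le_rfl hs0e
    rw [hφ0] at h1
    linarith
  · have hA : 0 < φ s₀ := lt_of_le_of_ne (hnonneg s₀ le_rfl) (Ne.symm hφ0)
    have hb1 : 0 < β - 1 := by linarith
    set μ := α / (β - 1) with hμdef
    have hμ : 0 < μ := div_pos hα hb1
    have hαμ : α = μ * (β - 1) := by rw [hμdef, div_mul_cancel₀ α hb1.ne']
    have hexp : α * β / (β - 1) = μ * β := by rw [hμdef]; ring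
    have heα : e ^ α = C * φ s₀ ^ (β - 1) * 2 ^ (μ * β) := by rw [he, hexp]
    have heαpos : 0 < e ^ α := by
      rw [heα]
      exact mul_pos (mul_pos hC (Real.rpow_pos_of_pos hA _)) (Real.rpow_pos_of_pos h2 _)
    have hepos : 0 < e := by
      rcases he0.lt_or_eq with h | h
      · exact h
      · exfalso; rw [← h, Real.zero_rpow hα.ne'] at heαpos; exact lt_irrefl 0 heαpos
    set s : ℕ → ℝ := fun k => s₀ + e - e * 2 ^ (-(k:ℝ)) with hsdef
    have hpow_pos : ∀ x : ℝ, (0:ℝ) < 2 ^ x := fun x => Real.rpow_pos_of_pos h2 x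
    have hpow_le1 : ∀ k : ℕ, (2:ℝ) ^ (-(k:ℝ)) ≤ 1 := fun k =>
      Real.rpow_le_one_of_one_le_of_nonpos one_le_two (neg_nonpos.mpr (Nat.cast_nonneg k))
    have hsle : ∀ k, s₀ ≤ s k := by
      intro k
      have h1 := hpow_le1 k
      have h2' := (hpow_pos (-(k:ℝ))).le
      simp only [hsdef]
      nlinarith
    have hsub : ∀ k, s k ≤ s₀ + e := by
      intro k
      have := hpow_pos (-(k:ℝ))
      simp only [hsdef]
      nlinarith
    have hstep : ∀ k : ℕ, s (k+1) - s k = e * 2 ^ (-((k:ℝ)+1)) := by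
      intro k
      have hdouble : (2:ℝ) ^ (-(k:ℝ)) = 2 * 2 ^ (-((k:ℝ)+1)) := by
        rw [show -(k:ℝ) = 1 + (-((k:ℝ)+1)) by ring, Real.rpow_add h2, Real.rpow_one]
      simp only [hsdef]
      push_cast
      linear_combination e * hdouble
    have key : ∀ k : ℕ, φ (s k) ≤ φ s₀ * 2 ^ (-(k:ℝ) * μ) := by
      intro k
      induction k with
      | zero =>
        have h0 : s 0 = s₀ := by simp [hsdef]
        rw [h0]
        simp
      | succ k ih =>
        have hgap : s (k+1) - s k = e * 2 ^ (-((k:ℝ)+1)) := hstep k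
        have hgap_pos : 0 < s (k+1) - s k := by
          rw [hgap]; exact mul_pos hepos (hpow_pos _)
        have h1 : φ (s (k+1)) ≤ C * φ (s k) ^ β / (s (k+1) - s k) ^ α :=
          hineq _ _ (hsle k) (by linarith)
        have h2' : φ (s k) ^ β ≤ (φ s₀ * 2 ^ (-(k:ℝ) * μ)) ^ β :=
          Real.rpow_le_rpow (hnonneg _ (hsle k)) ih (by linarith)
        have h3 : φ (s (k+1)) ≤ C * (φ s₀ * 2 ^ (-(k:ℝ) * μ)) ^ β / (s (k+1) - s k) ^ α := by
          apply le_trans h1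
          gcongr
        rw [hgap] at h3
        have hEq : C * (φ s₀ * 2 ^ (-(k:ℝ) * μ)) ^ β / (e * 2 ^ (-((k:ℝ)+1))) ^ α
            = φ s₀ * 2 ^ (-((k:ℝ)+1) * μ) := by
          rw [Real.mul_rpow hA.le (hpow_pos _).le, Real.mul_rpow hepos.le (hpow_pos _).le]
          rw [← Real.rpow_mul h2.le, ← Real.rpow_mul h2.le, heα]
          rw [div_eq_iff (by positivity)]
          symm
          have ha1 : φ s₀ * φ s₀ ^ (β - 1) = φ s₀ ^ β := by
            nth_rewrite 1 [← Real.rpow_one (φ s₀)]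
            rw [← Real.rpow_add hA]; ring_nf
          have h2s : (2:ℝ) ^ (-((k:ℝ)+1) * μ) * 2 ^ (μ * β) * 2 ^ (-((k:ℝ)+1) * α)
              = 2 ^ (-(k:ℝ) * μ * β) := by
            rw [← Real.rpow_add h2, ← Real.rpow_add h2]
            congr 1
            rw [hαμ]; ring
          calc φ s₀ * 2 ^ (-((k:ℝ)+1) * μ) * (C * φ s₀ ^ (β - 1) * 2 ^ (μ * β) * 2 ^ (-((k:ℝ)+1) * α))
              = C * ((φ s₀ * φ s₀ ^ (β - 1)) * (2 ^ (-((k:ℝ)+1) * μ) * 2 ^ (μ * β) * 2 ^ (-((k:ℝ)+1) * α))) := by ring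
            _ = C * (φ s₀ ^ β * 2 ^ (-(k:ℝ) * μ * β)) := by rw [ha1, h2s]
        rw [hEq] at h3
        convert h3 using 3
        push_cast
        ring
    have hbound : ∀ k : ℕ, φ (s₀ + e) ≤ φ s₀ * 2 ^ (-(k:ℝ) * μ) := fun k =>
      le_trans (hmono (s k) (s₀ + e) (hsle k) (hsub k)) (key k)
    -- limit
    have hr : (0:ℝ) < 2 ^ (-μ) := hpow_pos _
    have hr1 : (2:ℝ) ^ (-μ) < 1 :=
      Real.rpow_lt_one_of_one_lt_of_neg one_lt_two (by linarith)
    have hlim : Tendsto (fun k : ℕ => φ s₀ * 2 ^ (-(k:ℝ) * μ)) atTop (𝓝 0) := by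
      have heq : ∀ k : ℕ, φ s₀ * 2 ^ (-(k:ℝ) * μ) = φ s₀ * ((2:ℝ) ^ (-μ)) ^ k := by
        intro k
        rw [← Real.rpow_natCast ((2:ℝ) ^ (-μ)) k, ← Real.rpow_mul h2.le]
        ring_nf
      simp only [heq]
      rw [show (0:ℝ) = φ s₀ * 0 by ring]
      exact (tendsto_pow_atTop_nhds_zero_of_lt_one hr.le hr1).const_mul _
    have : φ (s₀ + e) ≤ 0 := ge_of_tendsto hlim (Filter.Eventually.of_forall hbound)
    linarith
end
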